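/- arXiv:1304.7378 — 2 statements merged into one kernel-verified Lean document; each statement's English description precedes it below -/
import Mathlib

section
/- In the positive singular braid monoid SBKLₙ⁺, for every pair (t,s) with 1 ≤ s < t ≤ n the fundamental element δ = a_{n(n−1)}a_{(n−1)(n−2)}⋯a_{21} satisfies δ = a_{ts} · a_{n(n−1)}a_{(n−1)(n−2)}⋯a_{(t+2)(t+1)} · a_{(t+1)s} · a_{t(t−1)}⋯a_{(s+2)(s+1)} · a_{s(s−1)}⋯a_{21}; in particular δ is left-divisible (and right-divisible) in SBKLₙ⁺ by every generator a_{ts}. -/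
/-!
STATEMENT 10: In the positive singular braid monoid SBKLₙ⁺, for every pair
(t,s) with 1 ≤ s < t ≤ n the fundamental element δ = a_{n(n−1)}⋯a_{21}
satisfies δ = a_{ts} · a_{n(n−1)}⋯a_{(t+2)(t+1)} · a_{(t+1)s} ·
a_{t(t−1)}⋯a_{(s+2)(s+1)} · a_{s(s−1)}⋯a_{21}; in particular δ is
left-divisible and right-divisible by every generator a_{ts}.
(For t = n the factors involving the index t+1 are absent; accordingly the
helper `ag` below is the unit on out-of-range indices.)
-/
open FreeMonoid

/-- Index pairs `(t, s)` with `1 ≤ s < t ≤ n`. -/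
def SPair (n : ℕ) : Type := {p : ℕ × ℕ // 1 ≤ p.2 ∧ p.2 < p.1 ∧ p.1 ≤ n}

/-- The Birman–Ko–Lee generators of the positive singular braid monoid:
`a_{ts}` and `b_{ts}` for `1 ≤ s < t ≤ n`. -/
inductive PGen (n : ℕ) : Type
  | a (p : SPair n) : PGen n
  | b (p : SPair n) : PGen n

/-- `a_{ts}` as an element of the free monoid on the generators (the unit if
the indices are invalid). -/
def ag (n t s : ℕ) : FreeMonoid (PGen n) :=
  if h : 1 ≤ s ∧ s < t ∧ t ≤ n then of (PGen.a ⟨(t, s), h⟩) else 1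

/-- `b_{ts}` as an element of the free monoid on the generators. -/
def bg (n t s : ℕ) : FreeMonoid (PGen n) :=
  if h : 1 ≤ s ∧ s < t ∧ t ≤ n then of (PGen.b ⟨(t, s), h⟩) else 1

/-- The defining relations of the positive singular braid monoid `SBKLₙ⁺`. -/
inductive posRel (n : ℕ) : FreeMonoid (PGen n) → FreeMonoid (PGen n) → Prop
  | comm_aa (t s r q : ℕ) (h₁ : 1 ≤ s ∧ s < t ∧ t ≤ n) (h₂ : 1 ≤ q ∧ q < r ∧ r ≤ n)
      (h : 0 < ((t : ℤ) - r) * ((t : ℤ) - q) * ((s : ℤ) - r) * ((s : ℤ) - q)) :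
      posRel n (ag n t s * ag n r q) (ag n r q * ag n t s)
  | band₁ (t s r : ℕ) (h₁ : 1 ≤ r) (h₂ : r < s) (h₃ : s < t) (h₄ : t ≤ n) :
      posRel n (ag n t s * ag n s r) (ag n t r * ag n t s)
  | band₂ (t s r : ℕ) (h₁ : 1 ≤ r) (h₂ : r < s) (h₃ : s < t) (h₄ : t ≤ n) :
      posRel n (ag n t r * ag n t s) (ag n s r * ag n t r)
  | comm_ab (t s r q : ℕ) (h₁ : 1 ≤ s ∧ s < t ∧ t ≤ n) (h₂ : 1 ≤ q ∧ q < r ∧ r ≤ n)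
      (h : 0 < ((t : ℤ) - r) * ((t : ℤ) - q) * ((s : ℤ) - r) * ((s : ℤ) - q)) :
      posRel n (ag n t s * bg n r q) (bg n r q * ag n t s)
  | comm_ab' (t s : ℕ) (h : 1 ≤ s ∧ s < t ∧ t ≤ n) :
      posRel n (ag n t s * bg n t s) (bg n t s * ag n t s)
  | mixed₁ (t s r : ℕ) (h₁ : 1 ≤ r) (h₂ : r < s) (h₃ : s < t) (h₄ : t ≤ n) :
      posRel n (ag n t s * bg n s r) (bg n t r * ag n t s)
  | mixed₂ (t s r : ℕ) (h₁ : 1 ≤ r) (h₂ : r < s) (h₃ : s < t) (h₄ : t ≤ n) :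
      posRel n (ag n s r * bg n t r) (bg n t s * ag n s r)
  | mixed₃ (t s r : ℕ) (h₁ : 1 ≤ r) (h₂ : r < s) (h₃ : s < t) (h₄ : t ≤ n) :
      posRel n (ag n t r * bg n t s) (bg n s r * ag n t r)
  | comm_bb (t s r q : ℕ) (h₁ : 1 ≤ s ∧ s < t ∧ t ≤ n) (h₂ : 1 ≤ q ∧ q < r ∧ r ≤ n)
      (h : 0 < ((t : ℤ) - r) * ((t : ℤ) - q) * ((s : ℤ) - r) * ((s : ℤ) - q)) :
      posRel n (bg n t s * bg n r q) (bg n r q * bg n t s)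

/-- The positive singular braid monoid `SBKLₙ⁺`. -/
def PosSBKL (n : ℕ) : Type := PresentedMonoid (posRel n)

instance (n : ℕ) : Monoid (PosSBKL n) :=
  inferInstanceAs (Monoid (PresentedMonoid (posRel n)))

/-- The descending chain `a_{hi,hi-1} a_{hi-1,hi-2} ⋯` of length `len`, as a
word in the free monoid on the generators. -/
def aChain (n hi len : ℕ) : FreeMonoid (PGen n) :=
  ((List.range len).map (fun j => ag n (hi - j) (hi - j - 1))).prod

/-- The fundamental word `δ = a_{n(n−1)}a_{(n−1)(n−2)}⋯a_{21}`. -/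
def deltaWord (n : ℕ) : FreeMonoid (PGen n) := aChain n n (n - 1)

/-- The canonical projection from the free monoid to `SBKLₙ⁺`. -/
def wordM (n : ℕ) (w : FreeMonoid (PGen n)) : PosSBKL n :=
  PresentedMonoid.mk (posRel n) w

/-- `a_{ts}` as an element of `SBKLₙ⁺`. -/
def aM (n t s : ℕ) : PosSBKL n := wordM n (ag n t s)

/-- `b_{ts}` as an element of `SBKLₙ⁺`. -/
def bM (n t s : ℕ) : PosSBKL n := wordM n (bg n t s)

/-- The fundamental element `δ` of `SBKLₙ⁺`. -/
def deltaM (n : ℕ) : PosSBKL n := wordM n (deltaWord n)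

/-! ### Auxiliary lemmas -/

private lemma wm_mul (n : ℕ) (u v : FreeMonoid (PGen n)) :
    wordM n (u * v) = wordM n u * wordM n v := rfl

private lemma req {n : ℕ} {u v : FreeMonoid (PGen n)} (h : posRel n u v) :
    wordM n u = wordM n v := Quotient.sound (ConGen.Rel.of u v h)

/-- `aM` is the unit on invalid indices. -/
private lemma aM_invalid {n t s : ℕ} (h : ¬ (1 ≤ s ∧ s < t ∧ t ≤ n)) :
    aM n t s = 1 := by
  unfold aM ag
  rw [dif_neg h]
  rfl

/-- monoid-level chain -/
private def AC (n hi len : ℕ) : PosSBKL n := wordM n (aChain n hi len)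

private lemma AC_zero (n hi : ℕ) : AC n hi 0 = 1 := rfl

private lemma aChain_succ_left (n hi len : ℕ) :
    aChain n hi (len + 1) = ag n hi (hi - 1) * aChain n (hi - 1) len := by
  unfold aChain
  rw [List.range_succ_eq_map, List.map_cons, List.prod_cons, List.map_map]
  congr 1
  refine congrArg List.prod (List.map_congr_left fun j _ => ?_)
  have h1 : hi - (j + 1) = hi - 1 - j := by omega
  simp only [Function.comp_apply, h1]
  

private lemma aChain_succ_right (n hi len : ℕ) :
    aChain n hi (len + 1) = aChain n hi len * ag n (hi - len) (hi - len - 1) := by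
  unfold aChain
  rw [List.range_succ, List.map_append, List.prod_append]
  simp

private lemma AC_succ_left (n hi len : ℕ) :
    AC n hi (len + 1) = aM n hi (hi - 1) * AC n (hi - 1) len := by
  unfold AC aM
  rw [aChain_succ_left, wm_mul]

private lemma AC_succ_right (n hi len : ℕ) :
    AC n hi (len + 1) = AC n hi len * aM n (hi - len) (hi - len - 1) := by
  unfold AC aM
  rw [aChain_succ_right, wm_mul]

private lemma AC_split (n : ℕ) (l1 : ℕ) : ∀ hi l2,
    AC n hi (l1 + l2) = AC n hi l1 * AC n (hi - l1) l2 := by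
  induction l1 with
  | zero => intro hi l2; simp [AC_zero]
  | succ k ih =>
    intro hi l2
    have h1 : k + 1 + l2 = (k + l2) + 1 := by omega
    rw [h1, AC_succ_left, ih (hi - 1) l2, AC_succ_left,
      show hi - 1 - k = hi - (k + 1) from by omega, mul_assoc]

/-- The two band relations, at the monoid level. -/
private lemma band1M {n : ℕ} (t s r : ℕ) (h₁ : 1 ≤ r) (h₂ : r < s) (h₃ : s < t) (h₄ : t ≤ n) :
    aM n t s * aM n s r = aM n t r * aM n t s :=
  req (posRel.band₁ t s r h₁ h₂ h₃ h₄)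

private lemma band2M {n : ℕ} (t s r : ℕ) (h₁ : 1 ≤ r) (h₂ : r < s) (h₃ : s < t) (h₄ : t ≤ n) :
    aM n t r * aM n t s = aM n s r * aM n t r :=
  req (posRel.band₂ t s r h₁ h₂ h₃ h₄)

/-- Commutation of `a_{ts}` with a single `a_{r,r-1}` whose indices avoid `s` and `t`. -/
private lemma comm_single {n : ℕ} (t s r : ℕ) (hv : 1 ≤ s ∧ s < t ∧ t ≤ n)
    (hd : r ≠ s ∧ r ≠ t ∧ r - 1 ≠ s ∧ r - 1 ≠ t) :
    aM n t s * aM n r (r - 1) = aM n r (r - 1) * aM n t s := by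
  by_cases hr : 1 ≤ r - 1 ∧ r - 1 < r ∧ r ≤ n
  · refine req (posRel.comm_aa t s r (r - 1) hv hr ?_)
    have h1 : 0 < ((t : ℤ) - r) * ((t : ℤ) - (r - 1 : ℕ)) := by
      rcases (show t < r - 1 ∨ r < t from by omega) with h | h
      · exact mul_pos_of_neg_of_neg (by omega) (by omega)
      · exact mul_pos (by omega) (by omega)
    have h2 : 0 < ((s : ℤ) - r) * ((s : ℤ) - (r - 1 : ℕ)) := by
      rcases (show s < r - 1 ∨ r < s from by omega) with h | h
      · exact mul_pos_of_neg_of_neg (by omega) (by omega)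
      · exact mul_pos (by omega) (by omega)
    calc (0:ℤ) < (((t : ℤ) - r) * ((t : ℤ) - (r - 1 : ℕ))) *
          (((s : ℤ) - r) * ((s : ℤ) - (r - 1 : ℕ))) := mul_pos h1 h2
      _ = ((t : ℤ) - r) * ((t : ℤ) - (r - 1 : ℕ)) * ((s : ℤ) - r) * ((s : ℤ) - (r - 1 : ℕ)) := by
          ring
  · rw [aM_invalid hr, mul_one, one_mul]

/-- Commutation of `a_{ts}` with a chain all of whose factors avoid the indices `s`, `t`. -/
private lemma comm_chain {n : ℕ} (t s : ℕ) (hv : 1 ≤ s ∧ s < t ∧ t ≤ n) : ∀ len hi,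
    (∀ j, j < len → hi - j ≠ s ∧ hi - j ≠ t ∧ hi - j - 1 ≠ s ∧ hi - j - 1 ≠ t) →
    aM n t s * AC n hi len = AC n hi len * aM n t s := by
  intro len
  induction len with
  | zero => intro hi _; rw [AC_zero, mul_one, one_mul]
  | succ k ih =>
    intro hi H
    have h0 := H 0 (by omega)
    simp only [Nat.sub_zero] at h0
    rw [AC_succ_left, ← mul_assoc, comm_single t s hi hv h0, mul_assoc,
      ih (hi - 1) (fun j hj => by have := H (j + 1) (by omega); constructor <;> omega),
      mul_assoc]

/-- Key lemma K : `a_{ts} · (a_{t,t-1} ⋯ a_{s+2,s+1}) = a_{t,t-1} ⋯ a_{s+1,s}`. -/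
private lemma lemK {n : ℕ} : ∀ d t s, 1 ≤ s → t ≤ n → t - s = d + 1 →
    aM n t s * AC n t d = AC n t (d + 1) := by
  intro d
  induction d with
  | zero =>
    intro t s hs htn hts
    have h1 : s = t - 1 := by omega
    subst h1
    rw [AC_zero, mul_one, AC_succ_left, AC_zero, mul_one]
  | succ k ih =>
    intro t s hs htn hts
    rw [AC_succ_left,
      show AC n t (k + 1 + 1) = aM n t (t - 1) * AC n (t - 1) (k + 1) from AC_succ_left n t (k+1),
      ← mul_assoc,
      show aM n t s * aM n t (t - 1) = aM n t (t - 1) * aM n (t - 1) s from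
        (band1M t (t - 1) s hs (by omega) (by omega) htn).symm,
      mul_assoc, ih (t - 1) s hs (by omega) (by omega)]

/-- Mirror lemma K' : `(a_{t-1,t-2} ⋯ a_{s+1,s}) · a_{ts} = a_{t,t-1} ⋯ a_{s+1,s}`. -/
private lemma lemK' {n : ℕ} : ∀ d t s, 1 ≤ s → t ≤ n → t - s = d + 1 →
    AC n (t - 1) d * aM n t s = AC n t (d + 1) := by
  intro d
  induction d with
  | zero =>
    intro t s hs htn hts
    have h1 : s = t - 1 := by omega
    subst h1
    rw [AC_zero, one_mul, AC_succ_left, AC_zero, mul_one]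
  | succ k ih =>
    intro t s hs htn hts
    have hbot : t - 1 - k = s + 1 := by omega
    have hbot1 : s + 1 - 1 = s := by omega
    rw [AC_succ_right, hbot, hbot1, mul_assoc,
      show aM n (s + 1) s * aM n t s = aM n t s * aM n t (s + 1) from
        (band2M t (s + 1) s hs (by omega) (by omega) htn).symm,
      ← mul_assoc,
      show AC n (t - 1) k * aM n t s = aM n t s * AC n (t - 1) k from
        (comm_chain t s ⟨hs, by omega, htn⟩ k (t - 1)
          (fun j hj => by constructor <;> omega)).symm,
      mul_assoc, ih t (s + 1) (by omega) htn (by omega), lemK (k + 1) t s hs htn hts]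

theorem delta_divisible_by_generators (n t s : ℕ) (h : 1 ≤ s ∧ s < t ∧ t ≤ n) :
    deltaM n =
      aM n t s *
        wordM n (aChain n n (n - t - 1) * ag n (t + 1) s *
           aChain n t (t - s - 1) * aChain n s (s - 1)) ∧
    (∃ u : PosSBKL n, deltaM n = aM n t s * u) ∧
    (∃ v : PosSBKL n, deltaM n = v * aM n t s) := by
  obtain ⟨hs, hst, htn⟩ := h
  -- δ as a chain, and its canonical splitting
  have hδ : deltaM n = AC n n (n - 1) := rfl
  have hsplit : deltaM n = AC n n (n - t) * (AC n t (t - s) * AC n s (s - 1)) := by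
    rw [hδ, show n - 1 = (n - t) + ((t - s) + (s - 1)) from by omega,
      AC_split, AC_split, show n - (n - t) = t from by omega,
      show t - (t - s) = s from by omega]
  -- the right-hand word of the first conjunct, split into monoid factors
  have hw : wordM n (aChain n n (n - t - 1) * ag n (t + 1) s *
      aChain n t (t - s - 1) * aChain n s (s - 1)) =
      AC n n (n - t - 1) * aM n (t + 1) s * AC n t (t - s - 1) * AC n s (s - 1) := rfl
  -- key lemma K, with the length rewritten
  have hK : AC n t (t - s) = aM n t s * AC n t (t - s - 1) := by
    have := lemK (n := n) (t - s - 1) t s hs htn (by omega)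
    rw [show t - s - 1 + 1 = t - s from by omega] at this
    exact this.symm
  -- LEFT decomposition
  have left : deltaM n = aM n t s *
      (AC n n (n - t - 1) * aM n (t + 1) s * AC n t (t - s - 1) * AC n s (s - 1)) := by
    rcases eq_or_lt_of_le htn with heq | hlt
    · -- t = n : the factors with index t+1 are trivial
      have h1 : aM n (t + 1) s = 1 := aM_invalid (by omega)
      have h2 : AC n n (n - t - 1) = 1 := by
        rw [show n - t - 1 = 0 from by omega]; exact AC_zero n n
      rw [hsplit, h1, h2, hK, show n - t = 0 from by omega, AC_zero]
      simp only [one_mul, mul_one, mul_assoc]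
    · -- t < n
      have hpeel := AC_succ_right n n (n - t - 1)
      rw [show n - t - 1 + 1 = n - t from by omega,
        show n - (n - t - 1) = t + 1 from by omega,
        show t + 1 - 1 = t from by omega] at hpeel
      have hb1 : aM n (t + 1) t * aM n t s = aM n (t + 1) s * aM n (t + 1) t :=
        band1M (t + 1) t s hs hst (by omega) (by omega)
      have hb2 : aM n (t + 1) s * aM n (t + 1) t = aM n t s * aM n (t + 1) s :=
        band2M (t + 1) t s hs hst (by omega) (by omega)
      have hcomm : aM n t s * AC n n (n - t - 1) = AC n n (n - t - 1) * aM n t s :=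
        comm_chain t s ⟨hs, hst, htn⟩ (n - t - 1) n (fun j hj => by constructor <;> omega)
      calc deltaM n = AC n n (n - t) * (AC n t (t - s) * AC n s (s - 1)) := hsplit
        _ = (AC n n (n - t - 1) * aM n (t + 1) t) *
            ((aM n t s * AC n t (t - s - 1)) * AC n s (s - 1)) := by rw [← hpeel, ← hK]
        _ = AC n n (n - t - 1) * ((aM n (t + 1) t * aM n t s) *
            (AC n t (t - s - 1) * AC n s (s - 1))) := by simp only [mul_assoc]
        _ = AC n n (n - t - 1) * ((aM n t s * aM n (t + 1) s) *
            (AC n t (t - s - 1) * AC n s (s - 1))) := by rw [hb1, hb2]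
        _ = (AC n n (n - t - 1) * aM n t s) *
            (aM n (t + 1) s * (AC n t (t - s - 1) * AC n s (s - 1))) := by
              simp only [mul_assoc]
        _ = (aM n t s * AC n n (n - t - 1)) *
            (aM n (t + 1) s * (AC n t (t - s - 1) * AC n s (s - 1))) := by rw [← hcomm]
        _ = aM n t s * (AC n n (n - t - 1) * aM n (t + 1) s * AC n t (t - s - 1) *
            AC n s (s - 1)) := by simp only [mul_assoc]
  -- RIGHT decomposition
  have hK' : AC n (t - 1) (t - s - 1) * aM n t s = AC n t (t - s) := by
    have := lemK' (n := n) (t - s - 1) t s hs htn (by omega)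
    rw [show t - s - 1 + 1 = t - s from by omega] at this
    exact this
  have right : deltaM n = (AC n n (n - t) * AC n (t - 1) (t - s - 1) * aM n t (s - 1) *
      AC n (s - 1) (s - 2)) * aM n t s := by
    rcases eq_or_lt_of_le hs with hs1 | hs2
    · -- s = 1
      have h1 : aM n t (s - 1) = 1 := aM_invalid (by omega)
      have h2 : AC n (s - 1) (s - 2) = 1 := by
        rw [show s - 2 = 0 from by omega]; exact AC_zero n (s - 1)
      have h3 : AC n s (s - 1) = 1 := by
        rw [show s - 1 = 0 from by omega]; exact AC_zero n s
      rw [hsplit, h3, mul_one, ← hK', h1, h2, mul_one, mul_one]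
      simp only [mul_assoc]
    · -- s ≥ 2
      have hpeel := AC_succ_left n s (s - 2)
      rw [show s - 2 + 1 = s - 1 from by omega] at hpeel
      have hb : aM n t s * aM n s (s - 1) = aM n t (s - 1) * aM n t s :=
        band1M t s (s - 1) (by omega) (by omega) hst htn
      have hcomm : aM n t s * AC n (s - 1) (s - 2) = AC n (s - 1) (s - 2) * aM n t s :=
        comm_chain t s ⟨hs, hst, htn⟩ (s - 2) (s - 1) (fun j hj => by constructor <;> omega)
      calc deltaM n = AC n n (n - t) * (AC n t (t - s) * AC n s (s - 1)) := hsplit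
        _ = AC n n (n - t) * ((AC n (t - 1) (t - s - 1) * aM n t s) *
            (aM n s (s - 1) * AC n (s - 1) (s - 2))) := by rw [hK', ← hpeel]
        _ = AC n n (n - t) * (AC n (t - 1) (t - s - 1) *
            ((aM n t s * aM n s (s - 1)) * AC n (s - 1) (s - 2))) := by
              simp only [mul_assoc]
        _ = AC n n (n - t) * (AC n (t - 1) (t - s - 1) *
            ((aM n t (s - 1) * aM n t s) * AC n (s - 1) (s - 2))) := by rw [hb]
        _ = AC n n (n - t) * (AC n (t - 1) (t - s - 1) *
            (aM n t (s - 1) * (aM n t s * AC n (s - 1) (s - 2)))) := by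
              simp only [mul_assoc]
        _ = AC n n (n - t) * (AC n (t - 1) (t - s - 1) *
            (aM n t (s - 1) * (AC n (s - 1) (s - 2) * aM n t s))) := by rw [hcomm]
        _ = (AC n n (n - t) * AC n (t - 1) (t - s - 1) * aM n t (s - 1) *
            AC n (s - 1) (s - 2)) * aM n t s := by simp only [mul_assoc]
  exact ⟨by rw [hw]; exact left, ⟨_, left⟩, ⟨_, right⟩⟩
end

section
/- In the positive singular braid monoid SBKLₙ⁺ the fundamental element δ satisfies the following commutation formulae: a_{ts}δ = δa_{(t+1)(s+1)} for 1 ≤ s < t < n; a_{ns}δ = δa_{(s+1)1} for 1 ≤ s < n; b_{ts}δ = δb_{(t+1)(s+1)} for 1 ≤ s < t < n; and b_{ns}δ = δb_{(s+1)1} for 1 ≤ s < n. -/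
/-!
STATEMENT 11: In the positive singular braid monoid SBKLₙ⁺ the fundamental
element δ satisfies: a_{ts}δ = δa_{(t+1)(s+1)} for 1 ≤ s < t < n;
a_{ns}δ = δa_{(s+1)1} for 1 ≤ s < n; b_{ts}δ = δb_{(t+1)(s+1)} for
1 ≤ s < t < n; and b_{ns}δ = δb_{(s+1)1} for 1 ≤ s < n.
-/
open FreeMonoid

/-! ### Auxiliary development -/

section Aux

variable {n : ℕ}

private lemma wordM_mul (u v : FreeMonoid (PGen n)) :
    wordM n (u * v) = wordM n u * wordM n v := rfl

private lemma wordM_one : wordM n (1 : FreeMonoid (PGen n)) = 1 := rfl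

private lemma wrel {u v : FreeMonoid (PGen n)} (h : posRel n u v) :
    wordM n u = wordM n v :=
  Quotient.sound (ConGen.Rel.of _ _ h)

/- generator-level relation wrappers -/

private lemma bandA1 {t s r : ℕ} (h₁ : 1 ≤ r) (h₂ : r < s) (h₃ : s < t) (h₄ : t ≤ n) :
    aM n t s * aM n s r = aM n t r * aM n t s := by
  have h := wrel (posRel.band₁ t s r h₁ h₂ h₃ h₄)
  rw [wordM_mul, wordM_mul] at h
  exact h

private lemma bandA2 {t s r : ℕ} (h₁ : 1 ≤ r) (h₂ : r < s) (h₃ : s < t) (h₄ : t ≤ n) :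
    aM n t r * aM n t s = aM n s r * aM n t r := by
  have h := wrel (posRel.band₂ t s r h₁ h₂ h₃ h₄)
  rw [wordM_mul, wordM_mul] at h
  exact h

private lemma commAA {t s r q : ℕ} (h₁ : 1 ≤ s ∧ s < t ∧ t ≤ n) (h₂ : 1 ≤ q ∧ q < r ∧ r ≤ n)
    (h : 0 < ((t : ℤ) - r) * ((t : ℤ) - q) * ((s : ℤ) - r) * ((s : ℤ) - q)) :
    aM n t s * aM n r q = aM n r q * aM n t s := by
  have hh := wrel (posRel.comm_aa t s r q h₁ h₂ h)
  rw [wordM_mul, wordM_mul] at hh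
  exact hh

private lemma commAB {t s r q : ℕ} (h₁ : 1 ≤ s ∧ s < t ∧ t ≤ n) (h₂ : 1 ≤ q ∧ q < r ∧ r ≤ n)
    (h : 0 < ((t : ℤ) - r) * ((t : ℤ) - q) * ((s : ℤ) - r) * ((s : ℤ) - q)) :
    aM n t s * bM n r q = bM n r q * aM n t s := by
  have hh := wrel (posRel.comm_ab t s r q h₁ h₂ h)
  rw [wordM_mul, wordM_mul] at hh
  exact hh

private lemma commABsame {t s : ℕ} (h : 1 ≤ s ∧ s < t ∧ t ≤ n) :
    aM n t s * bM n t s = bM n t s * aM n t s := by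
  have hh := wrel (posRel.comm_ab' t s h)
  rw [wordM_mul, wordM_mul] at hh
  exact hh

private lemma mixed1W {t s r : ℕ} (h₁ : 1 ≤ r) (h₂ : r < s) (h₃ : s < t) (h₄ : t ≤ n) :
    aM n t s * bM n s r = bM n t r * aM n t s := by
  have hh := wrel (posRel.mixed₁ t s r h₁ h₂ h₃ h₄)
  rw [wordM_mul, wordM_mul] at hh
  exact hh

private lemma mixed2W {t s r : ℕ} (h₁ : 1 ≤ r) (h₂ : r < s) (h₃ : s < t) (h₄ : t ≤ n) :
    aM n s r * bM n t r = bM n t s * aM n s r := by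
  have hh := wrel (posRel.mixed₂ t s r h₁ h₂ h₃ h₄)
  rw [wordM_mul, wordM_mul] at hh
  exact hh

private lemma mixed3W {t s r : ℕ} (h₁ : 1 ≤ r) (h₂ : r < s) (h₃ : s < t) (h₄ : t ≤ n) :
    aM n t r * bM n t s = bM n s r * aM n t r := by
  have hh := wrel (posRel.mixed₃ t s r h₁ h₂ h₃ h₄)
  rw [wordM_mul, wordM_mul] at hh
  exact hh

/- sign helpers -/

private lemma four_sign {a b c d : ℤ}
    (h : (0 < a ∧ 0 < b ∧ 0 < c ∧ 0 < d) ∨ (a < 0 ∧ b < 0 ∧ c < 0 ∧ d < 0) ∨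
      (0 < a ∧ 0 < b ∧ c < 0 ∧ d < 0) ∨ (a < 0 ∧ 0 < b ∧ c < 0 ∧ 0 < d)) :
    0 < a * b * c * d := by
  rcases h with ⟨ha, hb, hc, hd⟩ | ⟨ha, hb, hc, hd⟩ | ⟨ha, hb, hc, hd⟩ | ⟨ha, hb, hc, hd⟩
  · exact mul_pos (mul_pos (mul_pos ha hb) hc) hd
  · exact mul_pos_of_neg_of_neg (mul_neg_of_pos_of_neg (mul_pos_of_neg_of_neg ha hb) hc) hd
  · exact mul_pos_of_neg_of_neg (mul_neg_of_pos_of_neg (mul_pos ha hb) hc) hd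
  · exact mul_pos (mul_pos_of_neg_of_neg (mul_neg_of_neg_of_pos ha hb) hc) hd

private lemma sign_gen {T S k : ℕ} (hS : S < T)
    (h : (T + 1 ≤ k) ∨ (k + 1 < S) ∨ (S < k ∧ k + 1 < T)) :
    0 < ((T : ℤ) - (k + 1)) * ((T : ℤ) - k) * ((S : ℤ) - (k + 1)) * ((S : ℤ) - k) := by
  apply four_sign
  omega

private lemma sign_gen' {T S k : ℕ} (hS : S < T)
    (h : (T + 1 ≤ k) ∨ (k + 1 < S) ∨ (S < k ∧ k + 1 < T)) :
    0 < (((k : ℤ) + 1) - T) * (((k : ℤ) + 1) - S) * ((k : ℤ) - T) * ((k : ℤ) - S) := by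
  apply four_sign
  omega

/- chain words -/

private lemma aChain_zero (hi : ℕ) : aChain n hi 0 = 1 := rfl

private lemma aChain_succ (hi len : ℕ) :
    aChain n hi (len + 1) = aChain n hi len * ag n (hi - len) (hi - len - 1) := by
  simp [aChain, List.range_succ]

private lemma aChain_one (hi : ℕ) : aChain n hi 1 = ag n hi (hi - 1) := by
  have := aChain_succ (n := n) hi 0
  simpa [aChain_zero] using this

private lemma aChain_add (hi a b : ℕ) :
    aChain n hi (a + b) = aChain n hi a * aChain n (hi - a) b := by
  induction b with
  | zero => rw [Nat.add_zero, aChain_zero, mul_one]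
  | succ b ih =>
      rw [show a + (b + 1) = (a + b) + 1 from rfl, aChain_succ, ih, aChain_succ, mul_assoc,
        show hi - a - b = hi - (a + b) from by omega]

/- chains in the monoid -/

private def chM (n t m : ℕ) : PosSBKL n := wordM n (aChain n t (t - m))

private lemma chM_self (t : ℕ) : chM n t t = 1 := by
  unfold chM
  rw [Nat.sub_self]
  exact wordM_one

private lemma chM_split {q m t : ℕ} (hq : q ≤ m) (hm : m ≤ t) :
    chM n t q = chM n t m * chM n m q := by
  unfold chM
  rw [show t - q = (t - m) + (m - q) from by omega, aChain_add,
    show t - (t - m) = m from by omega, wordM_mul]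

private lemma chM_top {m t : ℕ} (h : m ≤ t) :
    chM n (t + 1) m = aM n (t + 1) t * chM n t m := by
  unfold chM
  rw [show (t + 1) - m = 1 + (t - m) from by omega, aChain_add, aChain_one,
    Nat.add_sub_cancel, wordM_mul]
  rfl

private lemma chM_bot {m t : ℕ} (h : m < t) :
    chM n t m = chM n t (m + 1) * aM n (m + 1) m := by
  unfold chM
  rw [show t - m = (t - (m + 1)) + 1 from by omega, aChain_succ,
    show t - (t - (m + 1)) = m + 1 from by omega, show m + 1 - 1 = m from by omega, wordM_mul]
  rfl

/- swap helper -/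

private lemma swap_l {M : Type*} [Monoid M] {a b c d : M} (h : a * b = c * d) (z : M) :
    a * (b * z) = c * (d * z) := by
  rw [← mul_assoc, h, mul_assoc]

/- generic commutation with a chain -/

private lemma comm_chain_aux (x : PosSBKL n) :
    ∀ d m, (∀ k, m ≤ k → k < m + d → x * aM n (k + 1) k = aM n (k + 1) k * x) →
      x * chM n (m + d) m = chM n (m + d) m * x := by
  intro d
  induction d with
  | zero =>
      intro m _
      rw [Nat.add_zero, chM_self, mul_one, one_mul]
  | succ d ih =>
      intro m hx
      have hC : chM n (m + (d + 1)) m = aM n (m + d + 1) (m + d) * chM n (m + d) m :=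
        chM_top (Nat.le_add_right m d)
      rw [hC, ← mul_assoc, hx (m + d) (Nat.le_add_right m d) (by omega), mul_assoc,
        ih m (fun k hk1 hk2 => hx k hk1 (by omega)), ← mul_assoc]

private lemma comm_chain_s11 {x : PosSBKL n} {m t : ℕ} (hmt : m ≤ t)
    (hx : ∀ k, m ≤ k → k < t → x * aM n (k + 1) k = aM n (k + 1) k * x) :
    x * chM n t m = chM n t m * x := by
  obtain ⟨d, rfl⟩ := Nat.exists_eq_add_of_le hmt
  exact comm_chain_aux x d m hx

private lemma commA_chain {T S m t : ℕ} (hS : 1 ≤ S) (hST : S < T) (hTn : T ≤ n)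
    (h1m : 1 ≤ m) (hmt : m ≤ t) (htn : t ≤ n)
    (hcase : (T + 1 ≤ m) ∨ (t < S) ∨ (S < m ∧ t < T)) :
    aM n T S * chM n t m = chM n t m * aM n T S := by
  refine comm_chain_s11 hmt (fun k hk1 hk2 => ?_)
  refine commAA (t := T) (s := S) (r := k + 1) (q := k) (by omega) (by omega) ?_
  push_cast
  exact sign_gen hST (by omega)

private lemma commB_chain {T S m t : ℕ} (hS : 1 ≤ S) (hST : S < T) (hTn : T ≤ n)
    (h1m : 1 ≤ m) (hmt : m ≤ t) (htn : t ≤ n)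
    (hcase : (T + 1 ≤ m) ∨ (t < S) ∨ (S < m ∧ t < T)) :
    bM n T S * chM n t m = chM n t m * bM n T S := by
  refine comm_chain_s11 hmt (fun k hk1 hk2 => ?_)
  refine (commAB (t := k + 1) (s := k) (r := T) (q := S) (by omega) (by omega) ?_).symm
  push_cast
  exact sign_gen' hST (by omega)

/- push lemmas -/

private lemma pushL_aux :
    ∀ d m s, 1 ≤ s → s < m → m + d ≤ n →
      aM n (m + d) s * chM n (m + d) m = chM n (m + d) m * aM n m s := by
  intro d
  induction d with
  | zero =>
      intro m s _ _ _
      rw [Nat.add_zero, chM_self, mul_one, one_mul]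
  | succ d ih =>
      intro m s hs hsm hn
      have hC : chM n (m + (d + 1)) m = aM n (m + d + 1) (m + d) * chM n (m + d) m :=
        chM_top (Nat.le_add_right m d)
      have hb : aM n (m + d + 1) s * aM n (m + d + 1) (m + d) =
          aM n (m + d + 1) (m + d) * aM n (m + d) s :=
        (bandA1 hs (by omega) (by omega) (by omega)).symm
      rw [hC, ← mul_assoc]
      rw [show aM n (m + (d + 1)) s = aM n (m + d + 1) s from rfl, hb, mul_assoc,
        ih m s hs hsm (by omega), ← mul_assoc]

private lemma pushL {s m t : ℕ} (hs : 1 ≤ s) (hsm : s < m) (hmt : m ≤ t) (htn : t ≤ n) :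
    aM n t s * chM n t m = chM n t m * aM n m s := by
  obtain ⟨d, rfl⟩ := Nat.exists_eq_add_of_le hmt
  exact pushL_aux d m s hs hsm htn

private lemma pushLb_aux :
    ∀ d m s, 1 ≤ s → s < m → m + d ≤ n →
      bM n (m + d) s * chM n (m + d) m = chM n (m + d) m * bM n m s := by
  intro d
  induction d with
  | zero =>
      intro m s _ _ _
      rw [Nat.add_zero, chM_self, mul_one, one_mul]
  | succ d ih =>
      intro m s hs hsm hn
      have hC : chM n (m + (d + 1)) m = aM n (m + d + 1) (m + d) * chM n (m + d) m :=
        chM_top (Nat.le_add_right m d)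
      have hb : bM n (m + d + 1) s * aM n (m + d + 1) (m + d) =
          aM n (m + d + 1) (m + d) * bM n (m + d) s :=
        (mixed1W hs (by omega) (by omega) (by omega)).symm
      rw [hC, ← mul_assoc]
      rw [show bM n (m + (d + 1)) s = bM n (m + d + 1) s from rfl, hb, mul_assoc,
        ih m s hs hsm (by omega), ← mul_assoc]

private lemma pushLb {s m t : ℕ} (hs : 1 ≤ s) (hsm : s < m) (hmt : m ≤ t) (htn : t ≤ n) :
    bM n t s * chM n t m = chM n t m * bM n m s := by
  obtain ⟨d, rfl⟩ := Nat.exists_eq_add_of_le hmt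
  exact pushLb_aux d m s hs hsm htn

private lemma bandComp1 {q T : ℕ} (hq : 1 ≤ q) (hqT : q + 1 < T) (hTn : T ≤ n) :
    aM n (q + 1) q * aM n T q = aM n T (q + 1) * aM n (q + 1) q := by
  have h2 := bandA2 (t := T) (s := q + 1) (r := q) hq (by omega) hqT hTn
  have h1 := bandA1 (t := T) (s := q + 1) (r := q) hq (by omega) hqT hTn
  exact h2.symm.trans h1.symm

private lemma pushR_aux :
    ∀ d q T, 1 ≤ q → q + d < T → T ≤ n →
      chM n (q + d) q * aM n T q = aM n T (q + d) * chM n (q + d) q := by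
  intro d
  induction d with
  | zero =>
      intro q T _ _ _
      rw [Nat.add_zero, chM_self, mul_one, one_mul]
  | succ d ih =>
      intro q T hq hqT hTn
      have hC : chM n (q + (d + 1)) q = chM n (q + d + 1) (q + 1) * aM n (q + 1) q :=
        chM_bot (by omega)
      have ih' := ih (q + 1) T (by omega) (by omega) hTn
      rw [show (q + 1) + d = q + d + 1 from by omega] at ih'
      have hb : aM n (q + 1) q * aM n T q = aM n T (q + 1) * aM n (q + 1) q :=
        bandComp1 hq (by omega) hTn
      rw [hC, mul_assoc, hb, ← mul_assoc, ih', mul_assoc]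
      rfl

private lemma pushR {q m T : ℕ} (hq : 1 ≤ q) (hqm : q ≤ m) (hmT : m < T) (hTn : T ≤ n) :
    chM n m q * aM n T q = aM n T m * chM n m q := by
  obtain ⟨d, rfl⟩ := Nat.exists_eq_add_of_le hqm
  exact pushR_aux d q T hq hmT hTn

private lemma descB_aux :
    ∀ d q T, 1 ≤ q → q + d < T → T ≤ n →
      bM n T (q + d) * chM n (q + d) q = chM n (q + d) q * bM n T q := by
  intro d
  induction d with
  | zero =>
      intro q T _ _ _
      rw [Nat.add_zero, chM_self, mul_one, one_mul]
  | succ d ih =>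
      intro q T hq hqT hTn
      have hC : chM n (q + (d + 1)) q = aM n (q + d + 1) (q + d) * chM n (q + d) q :=
        chM_top (Nat.le_add_right q d)
      have hb : bM n T (q + d + 1) * aM n (q + d + 1) (q + d) =
          aM n (q + d + 1) (q + d) * bM n T (q + d) :=
        (mixed2W (n := n) (t := T) (s := q + d + 1) (r := q + d) (by omega) (by omega) (by omega)
          hTn).symm
      rw [hC, ← mul_assoc]
      rw [show bM n T (q + (d + 1)) = bM n T (q + d + 1) from rfl, hb, mul_assoc,
        ih q T hq (by omega) hTn, ← mul_assoc]

private lemma descB {q m T : ℕ} (hq : 1 ≤ q) (hqm : q ≤ m) (hmT : m < T) (hTn : T ≤ n) :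
    bM n T m * chM n m q = chM n m q * bM n T q := by
  obtain ⟨d, rfl⟩ := Nat.exists_eq_add_of_le hqm
  exact descB_aux d q T hq hmT hTn

/- the fan decomposition -/

private lemma fanP {s : ℕ} (hs : 1 ≤ s) :
    ∀ t, s + 1 ≤ t → t < n →
      chM n (t + 1) s = aM n (t + 1) s * chM n t (s + 1) * aM n (t + 1) (s + 1) := by
  intro t ht
  induction t, ht using Nat.le_induction with
  | base =>
      intro hn
      rw [chM_self, mul_one]
      have e1 : chM n (s + 1 + 1) s = aM n (s + 1 + 1) (s + 1) * chM n (s + 1) s :=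
        chM_top (by omega)
      have e2 : chM n (s + 1) s = aM n (s + 1) s * chM n s s := chM_top (le_refl s)
      rw [e1, e2, chM_self, mul_one]
      exact bandA1 hs (by omega) (by omega) (by omega)
  | succ t ht ih =>
      intro hn
      have IH := ih (by omega)
      have e1 : chM n (t + 1 + 1) s = aM n (t + 1 + 1) (t + 1) * chM n (t + 1) s :=
        chM_top (by omega)
      have hb1 : aM n (t + 2) (t + 1) * aM n (t + 1) s = aM n (t + 2) s * aM n (t + 2) (t + 1) :=
        bandA1 hs (by omega) (by omega) (by omega)
      have hc1 : aM n (t + 2) (t + 1) * chM n t (s + 1) = chM n t (s + 1) * aM n (t + 2) (t + 1) :=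
        commA_chain (by omega) (by omega) (by omega) (by omega) (by omega) (by omega)
          (Or.inr (Or.inl (by omega)))
      have hb2 : aM n (t + 2) (t + 1) * aM n (t + 1) (s + 1) =
          aM n (t + 1) (s + 1) * aM n (t + 2) (s + 1) := by
        have x1 := bandA1 (n := n) (t := t + 2) (s := t + 1) (r := s + 1) (by omega) (by omega)
          (by omega) (by omega)
        have x2 := bandA2 (n := n) (t := t + 2) (s := t + 1) (r := s + 1) (by omega) (by omega)
          (by omega) (by omega)
        exact x1.trans x2
      have hp : chM n t (s + 1) * aM n (t + 1) (s + 1) = aM n (t + 1) t * chM n t (s + 1) :=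
        pushR (by omega) (by omega) (by omega) (by omega)
      have e2 : chM n (t + 1) (s + 1) = aM n (t + 1) t * chM n t (s + 1) := chM_top (by omega)
      calc chM n (t + 1 + 1) s
          = aM n (t + 2) (t + 1) * (aM n (t + 1) s * chM n t (s + 1) * aM n (t + 1) (s + 1)) := by
            rw [e1, IH]
        _ = (aM n (t + 2) (t + 1) * aM n (t + 1) s) * chM n t (s + 1) * aM n (t + 1) (s + 1) := by
            rw [← mul_assoc, ← mul_assoc]
        _ = (aM n (t + 2) s * aM n (t + 2) (t + 1)) * chM n t (s + 1) * aM n (t + 1) (s + 1) := by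
            rw [hb1]
        _ = aM n (t + 2) s * (aM n (t + 2) (t + 1) * chM n t (s + 1)) * aM n (t + 1) (s + 1) := by
            rw [mul_assoc (aM n (t + 2) s)]
        _ = aM n (t + 2) s * (chM n t (s + 1) * aM n (t + 2) (t + 1)) * aM n (t + 1) (s + 1) := by
            rw [hc1]
        _ = aM n (t + 2) s * chM n t (s + 1) *
              (aM n (t + 2) (t + 1) * aM n (t + 1) (s + 1)) := by
            rw [← mul_assoc, mul_assoc (aM n (t + 2) s * chM n t (s + 1))]
        _ = aM n (t + 2) s * chM n t (s + 1) *
              (aM n (t + 1) (s + 1) * aM n (t + 2) (s + 1)) := by rw [hb2]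
        _ = aM n (t + 2) s * (chM n t (s + 1) * aM n (t + 1) (s + 1)) * aM n (t + 2) (s + 1) := by
            simp only [mul_assoc]
        _ = aM n (t + 2) s * (aM n (t + 1) t * chM n t (s + 1)) * aM n (t + 2) (s + 1) := by
            rw [hp]
        _ = aM n (t + 1 + 1) s * chM n (t + 1) (s + 1) * aM n (t + 1 + 1) (s + 1) := by
            rw [e2]

/- the core commutation lemmas -/

private lemma coreA {s t : ℕ} (hs : 1 ≤ s) (hst : s < t) (htn : t < n) :
    chM n (t + 1) s * aM n (t + 1) (s + 1) = aM n t s * chM n (t + 1) s := by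
  have hfan := fanP hs t (by omega) htn
  set P := aM n (t + 1) s with hP
  set C1 := chM n t (s + 1) with hC1
  set Q := aM n (t + 1) (s + 1) with hQ
  set X := aM n t s with hX
  set S0 := aM n (s + 1) s with hS0
  set Tt := aM n (t + 1) t with hTt
  have h1 : P * C1 = C1 * P :=
    commA_chain (by omega) (by omega) (by omega) (by omega) (by omega) (by omega)
      (Or.inr (Or.inr ⟨by omega, by omega⟩))
  have h2 : P * Q = S0 * P := bandA2 hs (by omega) (by omega) (by omega)
  have h3 : chM n t s = C1 * S0 := chM_bot hst
  have h4 : chM n t s * P = Tt * chM n t s := pushR hs (by omega) (by omega) (by omega)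
  have h5 : X * P = Tt * X := by
    have x2 := bandA2 (n := n) (t := t + 1) (s := t) (r := s) hs hst (by omega) (by omega)
    have x1 := bandA1 (n := n) (t := t + 1) (s := t) (r := s) hs hst (by omega) (by omega)
    exact x2.symm.trans x1.symm
  have h6 : X * C1 = C1 * S0 := pushL hs (by omega) (by omega) (by omega)
  have EL : P * (C1 * Q) = Tt * (C1 * S0) := by
    calc P * (C1 * Q) = (P * C1) * Q := by rw [mul_assoc]
      _ = (C1 * P) * Q := by rw [h1]
      _ = C1 * (P * Q) := by rw [mul_assoc]
      _ = C1 * (S0 * P) := by rw [h2]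
      _ = (C1 * S0) * P := by rw [mul_assoc]
      _ = chM n t s * P := by rw [← h3]
      _ = Tt * chM n t s := h4
      _ = Tt * (C1 * S0) := by rw [h3]
  have ER : X * (P * C1) = Tt * (C1 * S0) := by
    calc X * (P * C1) = (X * P) * C1 := by rw [mul_assoc]
      _ = (Tt * X) * C1 := by rw [h5]
      _ = Tt * (X * C1) := by rw [mul_assoc]
      _ = Tt * (C1 * S0) := by rw [h6]
  have E : P * (C1 * Q) = X * (P * C1) := EL.trans ER.symm
  calc chM n (t + 1) s * Q = (P * C1 * Q) * Q := by rw [hfan]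
    _ = (P * (C1 * Q)) * Q := by rw [mul_assoc P C1 Q]
    _ = (X * (P * C1)) * Q := by rw [E]
    _ = X * (P * C1 * Q) := by rw [mul_assoc]
    _ = X * chM n (t + 1) s := by rw [← hfan]

private lemma coreB {s t : ℕ} (hs : 1 ≤ s) (hst : s < t) (htn : t < n) :
    chM n (t + 1) s * bM n (t + 1) (s + 1) = bM n t s * chM n (t + 1) s := by
  have hfan := fanP hs t (by omega) htn
  set P := aM n (t + 1) s with hP
  set C1 := chM n t (s + 1) with hC1
  set Q := aM n (t + 1) (s + 1) with hQ
  set bQ := bM n (t + 1) (s + 1) with hbQ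
  set bX := bM n t s with hbX
  set bB := bM n (t + 1) t with hbB
  have hq : Q * bQ = bQ * Q := commABsame (by omega)
  have hbx : bX * P = P * bB :=
    (mixed3W (n := n) (t := t + 1) (s := t) (r := s) hs hst (by omega) (by omega)).symm
  have hdesc : bB * C1 = C1 * bQ := descB (by omega) (by omega) (by omega) (by omega)
  calc chM n (t + 1) s * bQ = (P * C1 * Q) * bQ := by rw [hfan]
    _ = P * (C1 * (Q * bQ)) := by rw [mul_assoc, mul_assoc]
    _ = P * (C1 * (bQ * Q)) := by rw [hq]
    _ = P * ((C1 * bQ) * Q) := by rw [mul_assoc]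
    _ = P * ((bB * C1) * Q) := by rw [hdesc]
    _ = (P * bB) * (C1 * Q) := by rw [← mul_assoc, ← mul_assoc, mul_assoc (P * bB)]
    _ = (bX * P) * (C1 * Q) := by rw [← hbx]
    _ = bX * (P * C1 * Q) := by rw [mul_assoc, mul_assoc]
    _ = bX * chM n (t + 1) s := by rw [← hfan]

private lemma deltaM_eq (n : ℕ) : deltaM n = chM n n 1 := rfl

end Aux

theorem delta_commutation (n : ℕ) :
    (∀ t s : ℕ, 1 ≤ s → s < t → t < n →
      aM n t s * deltaM n = deltaM n * aM n (t + 1) (s + 1)) ∧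
    (∀ s : ℕ, 1 ≤ s → s < n →
      aM n n s * deltaM n = deltaM n * aM n (s + 1) 1) ∧
    (∀ t s : ℕ, 1 ≤ s → s < t → t < n →
      bM n t s * deltaM n = deltaM n * bM n (t + 1) (s + 1)) ∧
    (∀ s : ℕ, 1 ≤ s → s < n →
      bM n n s * deltaM n = deltaM n * bM n (s + 1) 1) := by
  refine ⟨?_, ?_, ?_, ?_⟩
  · -- a_{ts} δ = δ a_{(t+1)(s+1)}, for s < t < n
    intro t s hs hst htn
    rw [deltaM_eq]
    have sp1 : chM n n 1 = chM n n (t + 1) * chM n (t + 1) 1 := chM_split (by omega) (by omega)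
    have sp2 : chM n (t + 1) 1 = chM n (t + 1) s * chM n s 1 := chM_split (by omega) (by omega)
    have c1 : aM n t s * chM n n (t + 1) = chM n n (t + 1) * aM n t s :=
      commA_chain hs hst (by omega) (by omega) (by omega) (by omega) (Or.inl (by omega))
    have c2 : aM n (t + 1) (s + 1) * chM n s 1 = chM n s 1 * aM n (t + 1) (s + 1) :=
      commA_chain (by omega) (by omega) (by omega) (by omega) (by omega) (by omega)
        (Or.inr (Or.inl (by omega)))
    have hc : chM n (t + 1) s * aM n (t + 1) (s + 1) = aM n t s * chM n (t + 1) s :=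
      coreA hs hst htn
    rw [sp1, sp2]
    calc aM n t s * (chM n n (t + 1) * (chM n (t + 1) s * chM n s 1))
        = (aM n t s * chM n n (t + 1)) * (chM n (t + 1) s * chM n s 1) := by rw [mul_assoc]
      _ = (chM n n (t + 1) * aM n t s) * (chM n (t + 1) s * chM n s 1) := by rw [c1]
      _ = chM n n (t + 1) * ((aM n t s * chM n (t + 1) s) * chM n s 1) := by
          rw [mul_assoc, ← mul_assoc (aM n t s)]
      _ = chM n n (t + 1) * ((chM n (t + 1) s * aM n (t + 1) (s + 1)) * chM n s 1) := by
          rw [← hc]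
      _ = chM n n (t + 1) * (chM n (t + 1) s * (aM n (t + 1) (s + 1) * chM n s 1)) := by
          rw [mul_assoc (chM n (t + 1) s)]
      _ = chM n n (t + 1) * (chM n (t + 1) s * (chM n s 1 * aM n (t + 1) (s + 1))) := by
          rw [c2]
      _ = chM n n (t + 1) * (chM n (t + 1) s * chM n s 1) * aM n (t + 1) (s + 1) := by
          simp only [mul_assoc]
  · -- a_{ns} δ = δ a_{(s+1)1}, for s < n
    intro s hs hsn
    rw [deltaM_eq]
    have sp1 : chM n n 1 = chM n n (s + 1) * chM n (s + 1) 1 := chM_split (by omega) (by omega)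
    have sp2 : chM n (s + 1) 1 = aM n (s + 1) s * chM n s 1 := chM_top (by omega)
    have p1 : aM n n s * chM n n (s + 1) = chM n n (s + 1) * aM n (s + 1) s :=
      pushL hs (by omega) (by omega) (by omega)
    have p2 : chM n s 1 * aM n (s + 1) 1 = aM n (s + 1) s * chM n s 1 :=
      pushR (by omega) (by omega) (by omega) (by omega)
    rw [sp1, sp2]
    calc aM n n s * (chM n n (s + 1) * (aM n (s + 1) s * chM n s 1))
        = (aM n n s * chM n n (s + 1)) * (aM n (s + 1) s * chM n s 1) := by rw [mul_assoc]
      _ = (chM n n (s + 1) * aM n (s + 1) s) * (aM n (s + 1) s * chM n s 1) := by rw [p1]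
      _ = chM n n (s + 1) * (aM n (s + 1) s * (aM n (s + 1) s * chM n s 1)) := by
          rw [mul_assoc]
      _ = chM n n (s + 1) * (aM n (s + 1) s * (chM n s 1 * aM n (s + 1) 1)) := by rw [p2]
      _ = chM n n (s + 1) * (aM n (s + 1) s * chM n s 1) * aM n (s + 1) 1 := by
          simp only [mul_assoc]
  · -- b_{ts} δ = δ b_{(t+1)(s+1)}, for s < t < n
    intro t s hs hst htn
    rw [deltaM_eq]
    have sp1 : chM n n 1 = chM n n (t + 1) * chM n (t + 1) 1 := chM_split (by omega) (by omega)
    have sp2 : chM n (t + 1) 1 = chM n (t + 1) s * chM n s 1 := chM_split (by omega) (by omega)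
    have c1 : bM n t s * chM n n (t + 1) = chM n n (t + 1) * bM n t s :=
      commB_chain hs hst (by omega) (by omega) (by omega) (by omega) (Or.inl (by omega))
    have c2 : bM n (t + 1) (s + 1) * chM n s 1 = chM n s 1 * bM n (t + 1) (s + 1) :=
      commB_chain (by omega) (by omega) (by omega) (by omega) (by omega) (by omega)
        (Or.inr (Or.inl (by omega)))
    have hc : chM n (t + 1) s * bM n (t + 1) (s + 1) = bM n t s * chM n (t + 1) s :=
      coreB hs hst htn
    rw [sp1, sp2]
    calc bM n t s * (chM n n (t + 1) * (chM n (t + 1) s * chM n s 1))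
        = (bM n t s * chM n n (t + 1)) * (chM n (t + 1) s * chM n s 1) := by rw [mul_assoc]
      _ = (chM n n (t + 1) * bM n t s) * (chM n (t + 1) s * chM n s 1) := by rw [c1]
      _ = chM n n (t + 1) * ((bM n t s * chM n (t + 1) s) * chM n s 1) := by
          rw [mul_assoc, ← mul_assoc (bM n t s)]
      _ = chM n n (t + 1) * ((chM n (t + 1) s * bM n (t + 1) (s + 1)) * chM n s 1) := by
          rw [← hc]
      _ = chM n n (t + 1) * (chM n (t + 1) s * (bM n (t + 1) (s + 1) * chM n s 1)) := by
          rw [mul_assoc (chM n (t + 1) s)]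
      _ = chM n n (t + 1) * (chM n (t + 1) s * (chM n s 1 * bM n (t + 1) (s + 1))) := by
          rw [c2]
      _ = chM n n (t + 1) * (chM n (t + 1) s * chM n s 1) * bM n (t + 1) (s + 1) := by
          simp only [mul_assoc]
  · -- b_{ns} δ = δ b_{(s+1)1}, for s < n
    intro s hs hsn
    rw [deltaM_eq]
    have sp1 : chM n n 1 = chM n n (s + 1) * chM n (s + 1) 1 := chM_split (by omega) (by omega)
    have sp2 : chM n (s + 1) 1 = aM n (s + 1) s * chM n s 1 := chM_top (by omega)
    have q1 : bM n n s * chM n n (s + 1) = chM n n (s + 1) * bM n (s + 1) s :=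
      pushLb hs (by omega) (by omega) (by omega)
    have q2 : bM n (s + 1) s * aM n (s + 1) s = aM n (s + 1) s * bM n (s + 1) s :=
      (commABsame (by omega)).symm
    have q3 : bM n (s + 1) s * chM n s 1 = chM n s 1 * bM n (s + 1) 1 :=
      descB (by omega) (by omega) (by omega) (by omega)
    rw [sp1, sp2]
    calc bM n n s * (chM n n (s + 1) * (aM n (s + 1) s * chM n s 1))
        = (bM n n s * chM n n (s + 1)) * (aM n (s + 1) s * chM n s 1) := by rw [mul_assoc]
      _ = (chM n n (s + 1) * bM n (s + 1) s) * (aM n (s + 1) s * chM n s 1) := by rw [q1]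
      _ = chM n n (s + 1) * ((bM n (s + 1) s * aM n (s + 1) s) * chM n s 1) := by
          rw [mul_assoc, ← mul_assoc (bM n (s + 1) s)]
      _ = chM n n (s + 1) * ((aM n (s + 1) s * bM n (s + 1) s) * chM n s 1) := by rw [q2]
      _ = chM n n (s + 1) * (aM n (s + 1) s * (bM n (s + 1) s * chM n s 1)) := by
          rw [mul_assoc (aM n (s + 1) s)]
      _ = chM n n (s + 1) * (aM n (s + 1) s * (chM n s 1 * bM n (s + 1) 1)) := by rw [q3]
      _ = chM n n (s + 1) * (aM n (s + 1) s * chM n s 1) * bM n (s + 1) 1 := by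
          simp only [mul_assoc]
end
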